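/- For constants h > 0 and 0 < θ < 1, the function φ(x,y,t) = (16/(h(θ-2)²(x²+y²)))^(1/(θ-2)) satisfies φ_t - 2φ_x² - 2φφ_xx - 2φ_y² - 2φφ_yy + hφ^θ = 0 at all points with x²+y² > 0. -/

import Mathlib

noncomputable def px (f : ℝ → ℝ → ℝ → ℝ) : ℝ → ℝ → ℝ → ℝ :=
  fun x y t => deriv (fun u => f u y t) x

noncomputable def py (f : ℝ → ℝ → ℝ → ℝ) : ℝ → ℝ → ℝ → ℝ :=
  fun x y t => deriv (fun u => f x u t) y

noncomputable def pt (f : ℝ → ℝ → ℝ → ℝ) : ℝ → ℝ → ℝ → ℝ :=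
  fun x y t => deriv (fun u => f x y u) t

private lemma d1 (K g c x : ℝ) (hx : x ^ 2 + c ≠ 0) :
    HasDerivAt (fun u : ℝ => K * (u ^ 2 + c) ^ g)
      (K * ((2 * x) * g * (x ^ 2 + c) ^ (g - 1))) x := by
  have h0 : HasDerivAt (fun u : ℝ => u ^ 2 + c) (2 * x) x := by
    simpa using (hasDerivAt_pow 2 x).add_const c
  exact (h0.rpow_const (Or.inl hx)).const_mul K

private lemma d2 (K g c x : ℝ) (hx : x ^ 2 + c ≠ 0) :
    HasDerivAt (fun u : ℝ => K * ((2 * u) * g * (u ^ 2 + c) ^ (g - 1)))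
      (K * ((2 * 1 * g) * (x ^ 2 + c) ^ (g - 1) +
        ((2 * x) * g) * ((2 * x) * (g - 1) * (x ^ 2 + c) ^ (g - 1 - 1)))) x := by
  have h0 : HasDerivAt (fun u : ℝ => u ^ 2 + c) (2 * x) x := by
    simpa using (hasDerivAt_pow 2 x).add_const c
  have hf : HasDerivAt (fun u : ℝ => (u ^ 2 + c) ^ (g - 1))
      ((2 * x) * (g - 1) * (x ^ 2 + c) ^ (g - 1 - 1)) x :=
    h0.rpow_const (Or.inl hx)
  have hg : HasDerivAt (fun u : ℝ => (2 * u) * g) (2 * 1 * g) x :=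
    ((hasDerivAt_id x).const_mul 2).mul_const g
  exact (hg.mul hf).const_mul K

/-- For h > 0 and 0 < θ < 1, φ(x,y,t) = (16/(h(θ-2)²(x²+y²)))^(1/(θ-2)) satisfies
    φ_t - 2φ_x² - 2φφ_xx - 2φ_y² - 2φφ_yy + hφ^θ = 0 wherever x²+y² > 0. -/
theorem stmt_1 (h θ : ℝ) (hh : 0 < h) (hθ : 0 < θ ∧ θ < 1)
    (φ : ℝ → ℝ → ℝ → ℝ)
    (hφ : φ = fun x y _t =>
      (16 / (h * (θ - 2) ^ 2 * (x ^ 2 + y ^ 2))) ^ (1 / (θ - 2)) )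
    (x y t : ℝ) (hxy : 0 < x ^ 2 + y ^ 2) :
    pt φ x y t - 2 * (px φ x y t) ^ 2 - 2 * φ x y t * px (px φ) x y t -
      2 * (py φ x y t) ^ 2 - 2 * φ x y t * py (py φ) x y t +
      h * (φ x y t) ^ θ = 0 := by
  obtain ⟨hθ0, hθ1⟩ := hθ
  have h2ne : θ - 2 ≠ 0 := by intro hc; linarith [hc]
  have h2θ : (2 : ℝ) - θ ≠ 0 := by intro hc; linarith [hc]
  set C : ℝ := 16 / (h * (θ - 2) ^ 2) with hC_def
  set γ : ℝ := 1 / (2 - θ) with hγ_def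
  have hC : 0 < C := by positivity
  set K : ℝ := C ^ (-γ) with hK_def
  have hK : 0 < K := Real.rpow_pos_of_pos hC _
  have hαγ : 1 / (θ - 2) = -γ := by
    rw [hγ_def]; field_simp; ring
  -- representation lemma
  have hrep : ∀ u v : ℝ, 0 < u ^ 2 + v ^ 2 →
      (16 / (h * (θ - 2) ^ 2 * (u ^ 2 + v ^ 2))) ^ (1 / (θ - 2))
        = K * (u ^ 2 + v ^ 2) ^ γ := by
    intro u v hs
    have hsplit : 16 / (h * (θ - 2) ^ 2 * (u ^ 2 + v ^ 2))
        = C * (u ^ 2 + v ^ 2)⁻¹ := by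
      rw [hC_def]; field_simp
    rw [hsplit, Real.mul_rpow hC.le (by positivity), hαγ,
      Real.inv_rpow hs.le, Real.rpow_neg hs.le, inv_inv]
  have hopenx : IsOpen {w : ℝ | 0 < w ^ 2 + y ^ 2} :=
    isOpen_lt continuous_const (by continuity)
  have hopeny : IsOpen {w : ℝ | 0 < w ^ 2 + x ^ 2} :=
    isOpen_lt continuous_const (by continuity)
  -- first x-derivative, at every nearby point
  have hpx : ∀ u : ℝ, 0 < u ^ 2 + y ^ 2 →
      px φ u y t = K * ((2 * u) * γ * (u ^ 2 + y ^ 2) ^ (γ - 1)) := by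
    intro u hu
    have hev : (fun w => φ w y t) =ᶠ[nhds u] (fun w => K * (w ^ 2 + y ^ 2) ^ γ) := by
      filter_upwards [hopenx.mem_nhds hu] with w hw
      rw [hφ]; exact hrep w y hw
    show deriv (fun w => φ w y t) u = _
    rw [hev.deriv_eq]
    exact (d1 K γ (y ^ 2) u hu.ne').deriv
  have hpy : ∀ v : ℝ, 0 < v ^ 2 + x ^ 2 →
      py φ x v t = K * ((2 * v) * γ * (v ^ 2 + x ^ 2) ^ (γ - 1)) := by
    intro v hv
    have hev : (fun w => φ x w t) =ᶠ[nhds v] (fun w => K * (w ^ 2 + x ^ 2) ^ γ) := by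
      filter_upwards [hopeny.mem_nhds hv] with w hw
      simp only [hφ]
      rw [show x ^ 2 + w ^ 2 = w ^ 2 + x ^ 2 by ring]
      exact hrep w x (by linarith [hw])
    show deriv (fun w => φ x w t) v = _
    rw [hev.deriv_eq]
    exact (d1 K γ (x ^ 2) v hv.ne').deriv
  -- second derivatives
  have hxy' : 0 < y ^ 2 + x ^ 2 := by linarith [hxy]
  have hpxx : px (px φ) x y t =
      K * ((2 * 1 * γ) * (x ^ 2 + y ^ 2) ^ (γ - 1) +
        ((2 * x) * γ) * ((2 * x) * (γ - 1) * (x ^ 2 + y ^ 2) ^ (γ - 1 - 1))) := by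
    have hev : (fun w => px φ w y t) =ᶠ[nhds x]
        (fun w => K * ((2 * w) * γ * (w ^ 2 + y ^ 2) ^ (γ - 1))) := by
      filter_upwards [hopenx.mem_nhds hxy] with w hw
      exact hpx w hw
    show deriv (fun w => px φ w y t) x = _
    rw [hev.deriv_eq]
    exact (d2 K γ (y ^ 2) x hxy.ne').deriv
  have hpyy : py (py φ) x y t =
      K * ((2 * 1 * γ) * (y ^ 2 + x ^ 2) ^ (γ - 1) +
        ((2 * y) * γ) * ((2 * y) * (γ - 1) * (y ^ 2 + x ^ 2) ^ (γ - 1 - 1))) := by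
    have hev : (fun w => py φ x w t) =ᶠ[nhds y]
        (fun w => K * ((2 * w) * γ * (w ^ 2 + x ^ 2) ^ (γ - 1))) := by
      filter_upwards [hopeny.mem_nhds hxy'] with w hw
      exact hpy w hw
    show deriv (fun w => py φ x w t) y = _
    rw [hev.deriv_eq]
    exact (d2 K γ (x ^ 2) y hxy'.ne').deriv
  have hpt : pt φ x y t = 0 := by
    show deriv (fun u => φ x y u) t = 0
    rw [hφ]
    exact deriv_const _ _
  have hφval : φ x y t = K * (x ^ 2 + y ^ 2) ^ γ := by
    rw [hφ]; exact hrep x y hxy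
  rw [hpt, hpx x hxy, hpy y hxy', hpxx, hpyy, hφval]
  rw [show y ^ 2 + x ^ 2 = x ^ 2 + y ^ 2 from by ring]
  rw [show γ - 1 - 1 = γ - 2 from by ring]
  have hsne : (x ^ 2 + y ^ 2) ≠ 0 := hxy.ne'
  have hgt : γ * θ = 2 * γ - 1 := by
    rw [hγ_def]; field_simp; ring
  have hhC : h * C = 16 * γ ^ 2 := by
    rw [hC_def, hγ_def]; field_simp; ring
  have e31 : (K * (x ^ 2 + y ^ 2) ^ γ) ^ θ =
      (C * (K * K)) * ((x ^ 2 + y ^ 2) ^ (γ - 2) * (x ^ 2 + y ^ 2) ^ (γ - 2) *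
        ((x ^ 2 + y ^ 2) * (x ^ 2 + y ^ 2) * (x ^ 2 + y ^ 2))) := by
    rw [Real.mul_rpow hK.le (Real.rpow_nonneg hxy.le _), hK_def,
      ← Real.rpow_mul hC.le, ← Real.rpow_mul hxy.le,
      show -γ * θ = 1 + -γ + -γ from by rw [show -γ * θ = -(γ * θ) from by ring, hgt]; ring,
      show γ * θ = γ - 2 + (γ - 2) + 1 + 1 + 1 from by rw [hgt]; ring,
      Real.rpow_add hC, Real.rpow_add hC, Real.rpow_one,
      Real.rpow_add_one hsne, Real.rpow_add_one hsne, Real.rpow_add_one hsne,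
      Real.rpow_add hxy, ← hK_def]
    ring
  have E1 : (x ^ 2 + y ^ 2) ^ γ =
      (x ^ 2 + y ^ 2) ^ (γ - 2) * ((x ^ 2 + y ^ 2) * (x ^ 2 + y ^ 2)) := by
    rw [show γ = γ - 2 + 1 + 1 from by ring, Real.rpow_add_one hsne,
      Real.rpow_add_one hsne]
    ring
  have E2 : (x ^ 2 + y ^ 2) ^ (γ - 1) =
      (x ^ 2 + y ^ 2) ^ (γ - 2) * (x ^ 2 + y ^ 2) := by
    rw [show γ - 1 = γ - 2 + 1 from by ring, Real.rpow_add_one hsne]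
  rw [e31, E1, E2]
  linear_combination (K * K * ((x ^ 2 + y ^ 2) ^ (γ - 2) * (x ^ 2 + y ^ 2) ^ (γ - 2) *
    ((x ^ 2 + y ^ 2) * (x ^ 2 + y ^ 2) * (x ^ 2 + y ^ 2)))) * hhC
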